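/- Any minimizing sequence is uniformly bounded in L²: if ω ∈ K_μ then ‖ω‖₂² ≤ C(‖x₂ω‖₁^{2/3}‖ω‖₁^{4/3} − E₂[ω]); consequently, for a sequence {ω_n} with ω_n ∈ K_{μ_n}, μ_n → μ, and −E₂[ω_n] → I_μ < 0, one has limsup_n ‖ω_n‖₂ ≤ C μ^{1/3}. -/

import Mathlib

open Real MeasureTheory

def upperHalf : Set (ℝ × ℝ) := {p | 0 < p.2}

noncomputable def sqdist (x y : ℝ × ℝ) : ℝ := (x.1 - y.1) ^ 2 + (x.2 - y.2) ^ 2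

noncomputable def halfPlaneGreen (x y : ℝ × ℝ) : ℝ :=
  (1 / (4 * π)) * Real.log (1 + 4 * x.2 * y.2 / sqdist x y)


noncomputable def kineticEnergy (ω : ℝ × ℝ → ℝ) : ℝ :=
  (1 / 2) * ∫ x in upperHalf, ∫ y in upperHalf, halfPlaneGreen x y * ω x * ω y

/-- The penalized energy `E₂[ω] = E[ω] − (1/2) ∫ ω²`. -/
noncomputable def E₂ (ω : ℝ × ℝ → ℝ) : ℝ :=
  kineticEnergy ω - (1 / 2) * ∫ p in upperHalf, (ω p) ^ 2

/-- Membership in the admissible class `K_μ`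
(nonnegative, with the natural integrability, impulse `μ` and mass at most `1`). -/
def memK (μ : ℝ) (ω : ℝ × ℝ → ℝ) : Prop :=
  (∀ p, 0 ≤ ω p) ∧
  MeasureTheory.Integrable ω (MeasureTheory.volume.restrict upperHalf) ∧
  MeasureTheory.MemLp ω 2 (MeasureTheory.volume.restrict upperHalf) ∧
  MeasureTheory.Integrable (fun p => p.2 * ω p) (MeasureTheory.volume.restrict upperHalf) ∧
  (∫ p in upperHalf, p.2 * ω p) = μ ∧
  (∫ p in upperHalf, ω p) ≤ 1

def negEnergyValues (μ : ℝ) : Set ℝ := {r | ∃ ω : ℝ × ℝ → ℝ, memK μ ω ∧ r = -E₂ ω}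

/-! ### Auxiliary lemmas -/

noncomputable def kap (ρ c s : ℝ) : ℝ :=
  if |s - c| < ρ then (Real.sqrt (Real.sqrt |s - c|))⁻¹ else 0

lemma kap_nonneg (ρ c s : ℝ) : 0 ≤ kap ρ c s := by
  unfold kap; split <;> positivity

lemma log_le_two_sqrt {t : ℝ} (ht : 0 ≤ t) : Real.log (1 + t) ≤ 2 * Real.sqrt t := by
  have h1 : Real.log (1 + t) = 2 * Real.log (Real.sqrt (1 + t)) := by
    rw [Real.log_sqrt (by linarith)]; ring
  have h2 : Real.log (Real.sqrt (1 + t)) ≤ Real.sqrt (1 + t) - 1 :=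
    Real.log_le_sub_one_of_pos (Real.sqrt_pos.mpr (by linarith))
  have h3 : Real.sqrt (1 + t) ≤ 1 + Real.sqrt t := by
    rw [show (1 : ℝ) + Real.sqrt t = Real.sqrt ((1 + Real.sqrt t) ^ 2) from
      (Real.sqrt_sq (by positivity)).symm]
    apply Real.sqrt_le_sqrt
    nlinarith [Real.sq_sqrt ht, Real.sqrt_nonneg t]
  linarith

lemma sqrt_four : Real.sqrt 4 = 2 := by
  rw [show (4:ℝ) = 2^2 by norm_num, Real.sqrt_sq (by norm_num)]

lemma two_sqrt_quot {a b ρ : ℝ} (ha : 0 ≤ a) (hb : 0 ≤ b) (hρ : 0 < ρ) :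
    2 * Real.sqrt (4*a*b/ρ^2) = 4 * Real.sqrt a * Real.sqrt b / ρ := by
  rw [show 4*a*b/ρ^2 = (4*a*b)/ρ^2 by ring, Real.sqrt_div (by positivity) (ρ^2),
    Real.sqrt_sq hρ.le, show (4:ℝ)*a*b = 4*(a*b) by ring,
    Real.sqrt_mul (by norm_num : (0:ℝ) ≤ 4), Real.sqrt_mul ha, sqrt_four]
  ring

lemma green_bound {x y : ℝ × ℝ} {ρ : ℝ} (hx : 0 < x.2) (hy : 0 < y.2) (hρ : 0 < ρ)
    (hu : y.1 ≠ x.1) (hv : y.2 ≠ x.2) :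
    halfPlaneGreen x y ≤
      (1 / (4 * π)) * (4 * Real.sqrt x.2 * Real.sqrt y.2 / ρ
        + 4 * Real.sqrt ρ * (kap ρ x.1 y.1 * kap ρ x.2 y.2)) := by
  have hπ : (0:ℝ) < π := Real.pi_pos
  have hu0 : y.1 - x.1 ≠ 0 := sub_ne_zero.mpr hu
  have hv0 : y.2 - x.2 ≠ 0 := sub_ne_zero.mpr hv
  have habs_u : 0 < |y.1 - x.1| := abs_pos.mpr hu0
  have habs_v : 0 < |y.2 - x.2| := abs_pos.mpr hv0
  have hDeq : sqdist x y = (y.1 - x.1)^2 + (y.2 - x.2)^2 := by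
    unfold sqdist; ring
  have hD : 0 < sqdist x y := by
    rw [hDeq]
    have : 0 < (y.1 - x.1)^2 := by positivity
    nlinarith [sq_nonneg (y.2 - x.2)]
  unfold halfPlaneGreen
  have hmain : Real.log (1 + 4 * x.2 * y.2 / sqdist x y) ≤
      4 * Real.sqrt x.2 * Real.sqrt y.2 / ρ
        + 4 * Real.sqrt ρ * (kap ρ x.1 y.1 * kap ρ x.2 y.2) := by
    set D := sqdist x y with hDdef
    have hterm2 : 0 ≤ 4 * Real.sqrt ρ * (kap ρ x.1 y.1 * kap ρ x.2 y.2) := by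
      have := kap_nonneg ρ x.1 y.1; have := kap_nonneg ρ x.2 y.2; positivity
    rcases le_or_gt (ρ^2) D with hcase | hcase
    · have h1 : Real.log (1 + 4 * x.2 * y.2 / D) ≤ 2 * Real.sqrt (4 * x.2 * y.2 / D) :=
        log_le_two_sqrt (by positivity)
      have h2 : Real.sqrt (4 * x.2 * y.2 / D) ≤ Real.sqrt (4 * x.2 * y.2 / ρ^2) := by
        apply Real.sqrt_le_sqrt
        apply div_le_div_of_nonneg_left (by positivity) (by positivity) hcase
      have h3 := two_sqrt_quot hx.le hy.le hρ
      linarith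
    · have hu_lt : |y.1 - x.1| < ρ := by
        by_contra hcon
        push_neg at hcon
        have : ρ^2 ≤ (y.1 - x.1)^2 := by nlinarith [sq_abs (y.1 - x.1)]
        nlinarith [sq_nonneg (y.2 - x.2), hDeq]
      have hv_lt : |y.2 - x.2| < ρ := by
        by_contra hcon
        push_neg at hcon
        have : ρ^2 ≤ (y.2 - x.2)^2 := by nlinarith [sq_abs (y.2 - x.2)]
        nlinarith [sq_nonneg (y.1 - x.1), hDeq]
      have hkap1 : kap ρ x.1 y.1 = (Real.sqrt (Real.sqrt |y.1 - x.1|))⁻¹ := if_pos hu_lt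
      have hkap2 : kap ρ x.2 y.2 = (Real.sqrt (Real.sqrt |y.2 - x.2|))⁻¹ := if_pos hv_lt
      have hD0 : D ≠ 0 := hD.ne'
      have e1 : ρ^2/D * (4*x.2*y.2/ρ^2) = 4*x.2*y.2/D := by
        field_simp
      have h1 : 1 + 4*x.2*y.2/D ≤ ρ^2/D * (1 + 4*x.2*y.2/ρ^2) := by
        rw [mul_add, mul_one, e1]
        have : (1:ℝ) ≤ ρ^2/D := (one_le_div hD).mpr hcase.le
        linarith
      have h2 : Real.log (1 + 4*x.2*y.2/D) ≤ Real.log (ρ^2/D * (1 + 4*x.2*y.2/ρ^2)) :=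
        Real.log_le_log (by positivity) h1
      have h3 : Real.log (ρ^2/D * (1 + 4*x.2*y.2/ρ^2)) =
          Real.log (ρ^2/D) + Real.log (1 + 4*x.2*y.2/ρ^2) :=
        Real.log_mul (by positivity) (by positivity)
      have h4 : Real.log (1 + 4*x.2*y.2/ρ^2) ≤ 4 * Real.sqrt x.2 * Real.sqrt y.2 / ρ := by
        have := log_le_two_sqrt (t := 4*x.2*y.2/ρ^2) (by positivity)
        rw [two_sqrt_quot hx.le hy.le hρ] at this
        exact this
      have hsD : 0 < Real.sqrt D := Real.sqrt_pos.mpr hD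
      have h5 : Real.log (ρ^2/D) = 2 * Real.log (ρ / Real.sqrt D) := by
        rw [show ρ^2/D = (ρ/Real.sqrt D)^2 by
          rw [div_pow, Real.sq_sqrt hD.le]]
        rw [Real.log_pow]
        norm_num
      have hsDρ : Real.sqrt D < ρ := by
        have := Real.sqrt_lt_sqrt hD.le hcase
        rwa [Real.sqrt_sq hρ.le] at this
      have h6 : Real.log (ρ / Real.sqrt D) ≤ 2 * Real.sqrt (ρ / Real.sqrt D) := by
        have hs : 0 ≤ ρ / Real.sqrt D - 1 := by
          rw [sub_nonneg, le_div_iff₀ hsD]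
          linarith
        have hlog := log_le_two_sqrt hs
        rw [show 1 + (ρ / Real.sqrt D - 1) = ρ / Real.sqrt D by ring] at hlog
        calc Real.log (ρ / Real.sqrt D) ≤ 2 * Real.sqrt (ρ / Real.sqrt D - 1) := hlog
          _ ≤ 2 * Real.sqrt (ρ / Real.sqrt D) := by
              have := Real.sqrt_le_sqrt (show ρ / Real.sqrt D - 1 ≤ ρ / Real.sqrt D by linarith)
              linarith
      have h7 : Real.sqrt (ρ / Real.sqrt D) = Real.sqrt ρ * (Real.sqrt (Real.sqrt D))⁻¹ := by
        rw [Real.sqrt_div hρ.le, div_eq_mul_inv]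
      have h8 : (Real.sqrt (Real.sqrt D))⁻¹ ≤
          (Real.sqrt (Real.sqrt |y.1 - x.1|))⁻¹ * (Real.sqrt (Real.sqrt |y.2 - x.2|))⁻¹ := by
        have hprod : |y.1 - x.1| * |y.2 - x.2| ≤ D := by
          rw [hDeq]
          nlinarith [sq_nonneg (|y.1 - x.1| - |y.2 - x.2|), sq_abs (y.1 - x.1),
            sq_abs (y.2 - x.2), habs_u.le, habs_v.le]
        have hmul : Real.sqrt (Real.sqrt (|y.1 - x.1| * |y.2 - x.2|)) =
            Real.sqrt (Real.sqrt |y.1 - x.1|) * Real.sqrt (Real.sqrt |y.2 - x.2|) := by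
          rw [Real.sqrt_mul habs_u.le, Real.sqrt_mul (Real.sqrt_nonneg _)]
        have hle : Real.sqrt (Real.sqrt (|y.1 - x.1| * |y.2 - x.2|)) ≤
            Real.sqrt (Real.sqrt D) :=
          Real.sqrt_le_sqrt (Real.sqrt_le_sqrt hprod)
        have hpos2 : 0 < Real.sqrt (Real.sqrt (|y.1 - x.1| * |y.2 - x.2|)) := by positivity
        rw [← mul_inv, ← hmul]
        exact inv_anti₀ hpos2 hle
      have h9 : Real.log (ρ^2/D) ≤
          4 * Real.sqrt ρ * (kap ρ x.1 y.1 * kap ρ x.2 y.2) := by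
        rw [hkap1, hkap2, h5]
        calc 2 * Real.log (ρ / Real.sqrt D) ≤ 2 * (2 * Real.sqrt (ρ / Real.sqrt D)) := by
              linarith
          _ = 4 * (Real.sqrt ρ * (Real.sqrt (Real.sqrt D))⁻¹) := by rw [h7]; ring
          _ ≤ 4 * Real.sqrt ρ *
              ((Real.sqrt (Real.sqrt |y.1 - x.1|))⁻¹ * (Real.sqrt (Real.sqrt |y.2 - x.2|))⁻¹) := by
              rw [show (4:ℝ) * (Real.sqrt ρ * (Real.sqrt (Real.sqrt D))⁻¹)
                  = 4 * Real.sqrt ρ * (Real.sqrt (Real.sqrt D))⁻¹ by ring]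
              apply mul_le_mul_of_nonneg_left h8 (by positivity)
      linarith
  have hc : (0:ℝ) ≤ 1 / (4*π) := by positivity
  exact mul_le_mul_of_nonneg_left hmain hc

lemma kapsq_eq (ρ c s : ℝ) :
    (kap ρ c s)^2 = Set.indicator (Set.Ioo (-ρ) ρ) (fun r => (Real.sqrt |r|)⁻¹) (s - c) := by
  unfold kap
  by_cases h : |s - c| < ρ
  · rw [if_pos h, Set.indicator_of_mem (by rw [Set.mem_Ioo, ← abs_lt]; exact h)]
    rw [inv_pow, Real.sq_sqrt (Real.sqrt_nonneg _)]
  · rw [if_neg h, Set.indicator_of_notMem (by rw [Set.mem_Ioo, ← abs_lt]; exact h)]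
    norm_num

lemma oneD_intervalIntegrable {ρ : ℝ} (hρ : 0 < ρ) :
    IntervalIntegrable (fun r : ℝ => (Real.sqrt |r|)⁻¹) volume 0 ρ := by
  have hr : IntervalIntegrable (fun x : ℝ => x ^ (-(1/2) : ℝ)) volume 0 ρ :=
    intervalIntegral.intervalIntegrable_rpow' (by norm_num)
  rw [intervalIntegrable_iff_integrableOn_Ioc_of_le hρ.le] at hr ⊢
  apply hr.congr_fun ?_ measurableSet_Ioc
  intro r hr'
  rw [Set.mem_Ioc] at hr'
  show r ^ (-(1/2) : ℝ) = (Real.sqrt |r|)⁻¹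
  rw [abs_of_pos hr'.1, Real.rpow_neg hr'.1.le, Real.sqrt_eq_rpow]

lemma oneD_even : (fun r : ℝ => (Real.sqrt |(-r)|)⁻¹) = (fun r : ℝ => (Real.sqrt |r|)⁻¹) := by
  funext r; rw [abs_neg]

lemma oneD_intervalIntegrable_neg {ρ : ℝ} (hρ : 0 < ρ) :
    IntervalIntegrable (fun r : ℝ => (Real.sqrt |r|)⁻¹) volume (-ρ) 0 := by
  have h := ((IntervalIntegrable.iff_comp_neg (by simp)).mp (oneD_intervalIntegrable hρ))
  rw [oneD_even] at h
  simpa using h.symm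

lemma oneD_integrableOn {ρ : ℝ} (hρ : 0 < ρ) :
    IntegrableOn (fun r : ℝ => (Real.sqrt |r|)⁻¹) (Set.Ioo (-ρ) ρ) volume := by
  have h := (oneD_intervalIntegrable_neg hρ).trans (oneD_intervalIntegrable hρ)
  rw [intervalIntegrable_iff_integrableOn_Ioc_of_le (by linarith)] at h
  exact h.mono_set Set.Ioo_subset_Ioc_self

lemma oneD_value_pos {ρ : ℝ} (hρ : 0 < ρ) :
    ∫ r in (0:ℝ)..ρ, (Real.sqrt |r|)⁻¹ = 2 * Real.sqrt ρ := by
  have hcongr : ∫ r in (0:ℝ)..ρ, (Real.sqrt |r|)⁻¹ = ∫ r in (0:ℝ)..ρ, r ^ (-(1/2) : ℝ) := by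
    apply intervalIntegral.integral_congr
    intro r hr
    rw [Set.uIcc_of_le hρ.le, Set.mem_Icc] at hr
    show (Real.sqrt |r|)⁻¹ = r ^ (-(1/2) : ℝ)
    rcases eq_or_lt_of_le hr.1 with h0 | h0
    · rw [← h0]; simp [Real.zero_rpow (by norm_num : (-(1/2):ℝ) ≠ 0)]
    · rw [abs_of_pos h0, Real.rpow_neg h0.le, Real.sqrt_eq_rpow]
  rw [hcongr, integral_rpow (Or.inl (by norm_num))]
  rw [Real.zero_rpow (by norm_num : (-(1/2)+1:ℝ) ≠ 0)]
  rw [show (-(1/2)+1:ℝ) = 1/2 by norm_num, ← Real.sqrt_eq_rpow]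
  ring

lemma oneD_value {ρ : ℝ} (hρ : 0 < ρ) :
    ∫ r in Set.Ioo (-ρ) ρ, (Real.sqrt |r|)⁻¹ = 4 * Real.sqrt ρ := by
  have h1 : ∫ r in Set.Ioo (-ρ) ρ, (Real.sqrt |r|)⁻¹
      = ∫ r in (-ρ)..ρ, (Real.sqrt |r|)⁻¹ := by
    rw [intervalIntegral.integral_of_le (by linarith), integral_Ioc_eq_integral_Ioo]
  have h2 := intervalIntegral.integral_add_adjacent_intervals
    (oneD_intervalIntegrable_neg hρ) (oneD_intervalIntegrable hρ)
  have h3 : ∫ r in (-ρ:ℝ)..0, (Real.sqrt |r|)⁻¹ = ∫ r in (0:ℝ)..ρ, (Real.sqrt |r|)⁻¹ := by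
    have h4 := intervalIntegral.integral_comp_neg (a := (0:ℝ)) (b := ρ)
      (fun r : ℝ => (Real.sqrt |r|)⁻¹)
    rw [show (fun r : ℝ => (Real.sqrt |(-r)|)⁻¹) = (fun r : ℝ => (Real.sqrt |r|)⁻¹)
      from oneD_even, neg_zero] at h4
    exact h4.symm
  rw [h1, ← h2, h3]
  rw [oneD_value_pos hρ]
  ring

lemma kapsq_integrable {ρ : ℝ} (hρ : 0 < ρ) (c : ℝ) :
    Integrable (fun s => (kap ρ c s)^2) volume := by
  have hfun : (fun s => (kap ρ c s)^2)
      = fun s => (Set.indicator (Set.Ioo (-ρ) ρ) (fun r => (Real.sqrt |r|)⁻¹)) (s - c) :=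
    funext (kapsq_eq ρ c)
  rw [hfun]
  have hind : Integrable (Set.indicator (Set.Ioo (-ρ) ρ) (fun r => (Real.sqrt |r|)⁻¹)) volume :=
    (integrable_indicator_iff measurableSet_Ioo).mpr (oneD_integrableOn hρ)
  exact hind.comp_sub_right c

lemma kapsq_integral {ρ : ℝ} (hρ : 0 < ρ) (c : ℝ) :
    ∫ s, (kap ρ c s)^2 = 4 * Real.sqrt ρ := by
  have hfun : (fun s => (kap ρ c s)^2)
      = fun s => (Set.indicator (Set.Ioo (-ρ) ρ) (fun r => (Real.sqrt |r|)⁻¹)) (s - c) :=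
    funext (kapsq_eq ρ c)
  rw [hfun, integral_sub_right_eq_self
    (Set.indicator (Set.Ioo (-ρ) ρ) (fun r => (Real.sqrt |r|)⁻¹)) c,
    integral_indicator measurableSet_Ioo]
  exact oneD_value hρ

lemma kk_integrable {ρ : ℝ} (hρ : 0 < ρ) (c₁ c₂ : ℝ) :
    Integrable (fun z : ℝ × ℝ => (kap ρ c₁ z.1)^2 * (kap ρ c₂ z.2)^2) volume := by
  rw [Measure.volume_eq_prod]
  exact (kapsq_integrable hρ c₁).mul_prod (kapsq_integrable hρ c₂)

lemma kk_integral {ρ : ℝ} (hρ : 0 < ρ) (c₁ c₂ : ℝ) :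
    ∫ z : ℝ × ℝ, (kap ρ c₁ z.1)^2 * (kap ρ c₂ z.2)^2 = 16 * ρ := by
  rw [Measure.volume_eq_prod]
  have h : (∫ z : ℝ × ℝ, (kap ρ c₁ z.1)^2 * (kap ρ c₂ z.2)^2 ∂(Measure.prod volume volume))
      = (∫ s, (kap ρ c₁ s)^2) * (∫ s, (kap ρ c₂ s)^2) :=
    integral_prod_mul (fun s => (kap ρ c₁ s)^2) (fun s => (kap ρ c₂ s)^2)
  rw [h, kapsq_integral hρ c₁, kapsq_integral hρ c₂]
  rw [show (4*Real.sqrt ρ)*(4*Real.sqrt ρ) = 16*(Real.sqrt ρ*Real.sqrt ρ) by ring,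
    Real.mul_self_sqrt hρ.le]

lemma amgm {t : ℝ} (ht : 0 < t) (a b : ℝ) : a * b ≤ t/2 * a^2 + 1/(2*t) * b^2 := by
  have e : t/2*a^2 + 1/(2*t)*b^2 - a*b = (t*a - b)^2/(2*t) := by
    field_simp
    ring
  have h2 : (0:ℝ) ≤ (t*a - b)^2/(2*t) := div_nonneg (sq_nonneg _) (by linarith)
  linarith

lemma upperHalf_measurableSet : MeasurableSet upperHalf :=
  measurableSet_lt measurable_const measurable_snd

lemma ae_fst_ne (c : ℝ) : ∀ᵐ y : ℝ × ℝ ∂(volume.restrict upperHalf), y.1 ≠ c := by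
  rw [ae_iff]
  have hsub : {y : ℝ × ℝ | ¬ y.1 ≠ c} ⊆ ({c} : Set ℝ) ×ˢ (Set.univ : Set ℝ) := by
    intro y hy
    simp only [Set.mem_setOf_eq, not_not] at hy
    exact ⟨hy, trivial⟩
  refine le_antisymm ?_ zero_le
  calc (volume.restrict upperHalf) {y : ℝ × ℝ | ¬ y.1 ≠ c}
      ≤ volume {y : ℝ × ℝ | ¬ y.1 ≠ c} := Measure.restrict_apply_le _ _
    _ ≤ volume (({c} : Set ℝ) ×ˢ (Set.univ : Set ℝ)) := measure_mono hsub
    _ = 0 := by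
        rw [Measure.volume_eq_prod, Measure.prod_prod, Real.volume_singleton, zero_mul]

lemma ae_snd_ne (c : ℝ) : ∀ᵐ y : ℝ × ℝ ∂(volume.restrict upperHalf), y.2 ≠ c := by
  rw [ae_iff]
  have hsub : {y : ℝ × ℝ | ¬ y.2 ≠ c} ⊆ (Set.univ : Set ℝ) ×ˢ ({c} : Set ℝ) := by
    intro y hy
    simp only [Set.mem_setOf_eq, not_not] at hy
    exact ⟨trivial, hy⟩
  refine le_antisymm ?_ zero_le
  calc (volume.restrict upperHalf) {y : ℝ × ℝ | ¬ y.2 ≠ c}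
      ≤ volume {y : ℝ × ℝ | ¬ y.2 ≠ c} := Measure.restrict_apply_le _ _
    _ ≤ volume ((Set.univ : Set ℝ) ×ˢ ({c} : Set ℝ)) := measure_mono hsub
    _ = 0 := by
        rw [Measure.volume_eq_prod, Measure.prod_prod, Real.volume_singleton, mul_zero]



set_option maxHeartbeats 1000000 in
lemma part1 {μ : ℝ} (hμ : 0 < μ) (ω : ℝ × ℝ → ℝ) (hK : memK μ ω) :
    (∫ p in upperHalf, (ω p) ^ 2) ≤
      4 * ((∫ p in upperHalf, p.2 * ω p) ^ ((2 : ℝ) / 3) *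
            (∫ p in upperHalf, ω p) ^ ((4 : ℝ) / 3) - E₂ ω) := by
  obtain ⟨hpos, hInt, hL2, hMom, hAμ, hM1⟩ := hK
  have hπ : (0:ℝ) < π := Real.pi_pos
  have hπ3 : (3:ℝ) < π := Real.pi_gt_three
  have hU := upperHalf_measurableSet
  have haeU : ∀ᵐ p ∂(volume.restrict upperHalf), p ∈ upperHalf := ae_restrict_mem hU
  unfold E₂
  set A := ∫ p in upperHalf, p.2 * ω p with hAdef
  set M := ∫ p in upperHalf, ω p with hMdef
  set X := ∫ p in upperHalf, (ω p)^2 with hXdef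
  clear_value A M X
  have hA : 0 < A := hAμ ▸ hμ
  have hMnn : 0 ≤ M := by rw [hMdef]; exact integral_nonneg (fun p => hpos p)
  have hXnn : 0 ≤ X := by rw [hXdef]; exact integral_nonneg (fun p => sq_nonneg _)
  have hω2int : Integrable (fun p => (ω p)^2) (volume.restrict upperHalf) := hL2.integrable_sq
  have hωm : AEStronglyMeasurable ω (volume.restrict upperHalf) := hInt.aestronglyMeasurable
  have hsqint : Integrable (fun p : ℝ × ℝ => Real.sqrt p.2 * ω p) (volume.restrict upperHalf) := by
    apply Integrable.mono' (hInt.add hMom)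
    · exact ((Real.continuous_sqrt.comp continuous_snd).aestronglyMeasurable).mul hωm
    · filter_upwards [haeU] with p hp
      have hp2 : (0:ℝ) < p.2 := hp
      have hs : Real.sqrt p.2 ≤ 1 + p.2 := by
        nlinarith [Real.sq_sqrt hp2.le, Real.sqrt_nonneg p.2]
      rw [Real.norm_eq_abs, abs_of_nonneg (mul_nonneg (Real.sqrt_nonneg _) (hpos p))]
      simp only [Pi.add_apply]
      nlinarith [hpos p, Real.sqrt_nonneg p.2]
  have hXpos : 0 < X := by
    rcases hXnn.eq_or_lt with h0 | h0
    · exfalso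
      have hzero : (fun p => (ω p)^2) =ᵐ[volume.restrict upperHalf] 0 :=
        (integral_eq_zero_iff_of_nonneg (fun p => sq_nonneg _) hω2int).mp
          (hXdef.symm.trans h0.symm)
      have hωzero : ω =ᵐ[volume.restrict upperHalf] 0 := by
        filter_upwards [hzero] with p hp
        exact pow_eq_zero_iff (two_ne_zero) |>.mp hp
      have hA0 : A = 0 := by
        have hz : (fun p : ℝ × ℝ => p.2 * ω p) =ᵐ[volume.restrict upperHalf] 0 := by
          filter_upwards [hωzero] with p hp
          simp [hp]
        rw [hAdef, integral_congr_ae hz]; simp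
      rw [hA0] at hA; exact lt_irrefl 0 hA
    · exact h0
  have hMpos : 0 < M := by
    rcases hMnn.eq_or_lt with h0 | h0
    · exfalso
      have hωzero : ω =ᵐ[volume.restrict upperHalf] 0 :=
        (integral_eq_zero_iff_of_nonneg hpos hInt).mp (hMdef.symm.trans h0.symm)
      have hA0 : A = 0 := by
        have hz : (fun p : ℝ × ℝ => p.2 * ω p) =ᵐ[volume.restrict upperHalf] 0 := by
          filter_upwards [hωzero] with p hp
          simp [hp]
        rw [hAdef, integral_congr_ae hz]; simp
      rw [hA0] at hA; exact lt_irrefl 0 hA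
    · exact h0
  set S := ∫ p in upperHalf, Real.sqrt p.2 * ω p with hSdef
  clear_value S
  have hS0 : 0 ≤ S := by
    rw [hSdef]; exact integral_nonneg (fun p => mul_nonneg (Real.sqrt_nonneg _) (hpos p))
  have hsA : 0 < Real.sqrt A := Real.sqrt_pos.mpr hA
  have hsM : 0 < Real.sqrt M := Real.sqrt_pos.mpr hMpos
  have hS_le : S ≤ Real.sqrt A * Real.sqrt M := by
    set t' := Real.sqrt M / Real.sqrt A with ht'def
    clear_value t'
    have ht' : 0 < t' := by rw [ht'def]; exact div_pos hsM hsA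
    have hmono : S ≤ ∫ p in upperHalf, (t'/2 * (p.2 * ω p) + 1/(2*t') * ω p) := by
      rw [hSdef]
      apply integral_mono_of_nonneg
      · exact Filter.Eventually.of_forall fun p => mul_nonneg (Real.sqrt_nonneg _) (hpos p)
      · exact (hMom.const_mul _).add (hInt.const_mul _)
      · filter_upwards [haeU] with p hp
        have hp2 : (0:ℝ) < p.2 := hp
        have h1 := amgm ht' (Real.sqrt p.2) 1
        rw [Real.sq_sqrt hp2.le] at h1
        have h2 : Real.sqrt p.2 ≤ t'/2 * p.2 + 1/(2*t') := by
          calc Real.sqrt p.2 = Real.sqrt p.2 * 1 := by ring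
            _ ≤ t'/2 * p.2 + 1/(2*t') * 1^2 := h1
            _ = t'/2 * p.2 + 1/(2*t') := by ring
        calc Real.sqrt p.2 * ω p ≤ (t'/2 * p.2 + 1/(2*t')) * ω p :=
              mul_le_mul_of_nonneg_right h2 (hpos p)
          _ = t'/2 * (p.2 * ω p) + 1/(2*t') * ω p := by ring
    have hval : (∫ p in upperHalf, (t'/2 * (p.2 * ω p) + 1/(2*t') * ω p))
        = t'/2 * A + 1/(2*t') * M := by
      rw [integral_add (hMom.const_mul _) (hInt.const_mul _), integral_const_mul _ _,
        integral_const_mul _ _, ← hAdef, ← hMdef]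
    have e1 : t'/2 * A = Real.sqrt M * Real.sqrt A / 2 := by
      rw [ht'def, show Real.sqrt M / Real.sqrt A / 2 * A
        = Real.sqrt M * (A / Real.sqrt A) / 2 by ring, Real.div_sqrt]
    have e2 : 1/(2*t') * M = Real.sqrt A * Real.sqrt M / 2 := by
      have h21 : 1/(2*t') = Real.sqrt A/(2*Real.sqrt M) := by
        rw [ht'def]; field_simp
      rw [h21, show Real.sqrt A/(2*Real.sqrt M)*M = Real.sqrt A*(M/Real.sqrt M)/2 by ring,
        Real.div_sqrt]
    rw [hval, e1, e2] at hmono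
    linarith
  have hS2 : S * S ≤ A * M := by
    have h := mul_le_mul hS_le hS_le hS0 (by positivity)
    calc S*S ≤ (Real.sqrt A*Real.sqrt M)*(Real.sqrt A*Real.sqrt M) := h
      _ = (Real.sqrt A*Real.sqrt A)*(Real.sqrt M*Real.sqrt M) := by ring
      _ = A*M := by rw [Real.mul_self_sqrt hA.le, Real.mul_self_sqrt hMnn]
  set Y := X ^ ((1:ℝ)/4) with hYdef
  clear_value Y
  have hY : 0 < Y := by rw [hYdef]; exact Real.rpow_pos_of_pos hXpos _
  have hY2 : Y * Y = Real.sqrt X := by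
    rw [hYdef, ← Real.rpow_add hXpos, Real.sqrt_eq_rpow]
    norm_num
  set ρ := Real.sqrt A / Y with hρdef
  clear_value ρ
  have hρ : 0 < ρ := by rw [hρdef]; exact div_pos hsA hY
  have hsX : 0 < Real.sqrt X := Real.sqrt_pos.mpr hXpos
  have hsρ : 0 < Real.sqrt ρ := Real.sqrt_pos.mpr hρ
  -- inner bound
  have inner_bd : ∀ x, x ∈ upperHalf →
      (∫ y in upperHalf, halfPlaneGreen x y * ω x * ω y) ≤
        S/(π*ρ) * (Real.sqrt x.2 * ω x) + (4/π*(ρ*Real.sqrt X)) * ω x := by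
    intro x hx
    have hx2 : (0:ℝ) < x.2 := hx
    set t := Real.sqrt X / (4*Real.sqrt ρ) with htdef
    clear_value t
    have ht : 0 < t := by rw [htdef]; positivity
    set c₁ := ω x * ((1/(4*π)) * (4*Real.sqrt x.2/ρ)) with hc1
    set c₂ := ω x * ((1/(4*π)) * (4*Real.sqrt ρ * (t/2))) with hc2
    set c₃ := ω x * ((1/(4*π)) * (4*Real.sqrt ρ * (1/(2*t)))) with hc3
    clear_value c₁ c₂ c₃
    have hkk2 : Integrable (fun y : ℝ × ℝ => (kap ρ x.1 y.1)^2 * (kap ρ x.2 y.2)^2)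
        (volume.restrict upperHalf) := (kk_integrable hρ x.1 x.2).restrict
    have hm : Integrable (fun y : ℝ × ℝ => c₁ * (Real.sqrt y.2 * ω y)
        + c₂ * ((kap ρ x.1 y.1)^2 * (kap ρ x.2 y.2)^2) + c₃ * (ω y)^2)
        (volume.restrict upperHalf) :=
      ((hsqint.const_mul c₁).add (hkk2.const_mul c₂)).add (hω2int.const_mul c₃)
    have hstep : (∫ y in upperHalf, halfPlaneGreen x y * ω x * ω y) ≤
        ∫ y in upperHalf, (c₁ * (Real.sqrt y.2 * ω y)
          + c₂ * ((kap ρ x.1 y.1)^2 * (kap ρ x.2 y.2)^2) + c₃ * (ω y)^2) := by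
      apply integral_mono_of_nonneg ?_ hm ?_
      · filter_upwards [haeU] with y hy
        have hy2 : (0:ℝ) < y.2 := hy
        have hG : 0 ≤ halfPlaneGreen x y := by
          unfold halfPlaneGreen
          have hfrac : (0:ℝ) ≤ 4*x.2*y.2/sqdist x y := by
            apply div_nonneg
            · nlinarith
            · unfold sqdist; positivity
          exact mul_nonneg (by positivity) (Real.log_nonneg (by linarith))
        exact mul_nonneg (mul_nonneg hG (hpos x)) (hpos y)
      · filter_upwards [haeU, ae_fst_ne x.1, ae_snd_ne x.2] with y hy hy1 hy2
        have hy2' : (0:ℝ) < y.2 := hy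
        have hGb := green_bound hx2 hy2' hρ hy1 hy2
        have h2 := amgm ht (kap ρ x.1 y.1 * kap ρ x.2 y.2) (ω y)
        calc halfPlaneGreen x y * ω x * ω y
            ≤ ((1/(4*π)) * (4*Real.sqrt x.2*Real.sqrt y.2/ρ
                + 4*Real.sqrt ρ * (kap ρ x.1 y.1 * kap ρ x.2 y.2))) * ω x * ω y :=
              mul_le_mul_of_nonneg_right (mul_le_mul_of_nonneg_right hGb (hpos x)) (hpos y)
          _ = c₁ * (Real.sqrt y.2 * ω y) + (ω x * ((1/(4*π)) * (4*Real.sqrt ρ)))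
                * ((kap ρ x.1 y.1 * kap ρ x.2 y.2) * ω y) := by
              rw [hc1]; ring
          _ ≤ c₁ * (Real.sqrt y.2 * ω y) + (ω x * ((1/(4*π)) * (4*Real.sqrt ρ)))
                * (t/2 * (kap ρ x.1 y.1 * kap ρ x.2 y.2)^2 + 1/(2*t) * (ω y)^2) := by
              have hcnn : 0 ≤ ω x * ((1/(4*π)) * (4*Real.sqrt ρ)) :=
                mul_nonneg (hpos x) (by positivity)
              have := mul_le_mul_of_nonneg_left h2 hcnn
              linarith
          _ = c₁ * (Real.sqrt y.2 * ω y) + c₂ * ((kap ρ x.1 y.1)^2 * (kap ρ x.2 y.2)^2)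
                + c₃ * (ω y)^2 := by
              rw [hc2, hc3, mul_pow]; ring
    have hval : (∫ y in upperHalf, (c₁ * (Real.sqrt y.2 * ω y)
          + c₂ * ((kap ρ x.1 y.1)^2 * (kap ρ x.2 y.2)^2) + c₃ * (ω y)^2))
        = c₁ * S + c₂ * (∫ y in upperHalf, (kap ρ x.1 y.1)^2 * (kap ρ x.2 y.2)^2) + c₃ * X := by
      have hi12 : Integrable (fun y : ℝ × ℝ => c₁ * (Real.sqrt y.2 * ω y)
          + c₂ * ((kap ρ x.1 y.1)^2 * (kap ρ x.2 y.2)^2)) (volume.restrict upperHalf) :=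
        (hsqint.const_mul c₁).add (hkk2.const_mul c₂)
      rw [integral_add hi12 (hω2int.const_mul c₃),
        integral_add (hsqint.const_mul c₁) (hkk2.const_mul c₂),
        integral_const_mul _ _, integral_const_mul _ _, integral_const_mul _ _, ← hSdef, ← hXdef]
    have hKx : (∫ y in upperHalf, (kap ρ x.1 y.1)^2 * (kap ρ x.2 y.2)^2) ≤ 16*ρ := by
      rw [← kk_integral hρ x.1 x.2]
      apply integral_mono_measure Measure.restrict_le_self ?_ (kk_integrable hρ x.1 x.2)
      exact Filter.Eventually.of_forall fun y => by positivity
    have hc2nn : 0 ≤ c₂ := by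
      rw [hc2]; exact mul_nonneg (hpos x) (by positivity)
    have final_eq : c₁ * S + c₂ * (16*ρ) + c₃ * X
        = S/(π*ρ) * (Real.sqrt x.2 * ω x) + (4/π*(ρ*Real.sqrt X)) * ω x := by
      have hρρ : Real.sqrt ρ * Real.sqrt ρ = ρ := Real.mul_self_sqrt hρ.le
      have hT1 : c₁ * S = S/(π*ρ) * (Real.sqrt x.2 * ω x) := by
        rw [hc1]; field_simp [hπ.ne', hρ.ne']
      have htaux : 4*Real.sqrt ρ*(t/2) = Real.sqrt X / 2 := by
        rw [htdef]; field_simp [hsρ.ne']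
      have hT2 : c₂ * (16*ρ) = (2/π) * (ρ * Real.sqrt X) * ω x := by
        rw [hc2, htaux]; field_simp [hπ.ne']; ring
      have htaux3 : 4*Real.sqrt ρ*(1/(2*t)) = 8 * ρ / Real.sqrt X := by
        rw [htdef,
          show (1:ℝ)/(2*(Real.sqrt X/(4*Real.sqrt ρ))) = 2*Real.sqrt ρ/Real.sqrt X by
            field_simp [hsρ.ne', hsX.ne']; ring,
          show 4*Real.sqrt ρ * (2*Real.sqrt ρ/Real.sqrt X)
            = 8*(Real.sqrt ρ*Real.sqrt ρ)/Real.sqrt X by ring, hρρ]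
      have hT3 : c₃ * X = (2/π) * (ρ * Real.sqrt X) * ω x := by
        rw [hc3, htaux3,
          show ω x * (1/(4*π) * (8*ρ/Real.sqrt X)) * X
            = (2/π) * (ρ * (X/Real.sqrt X)) * ω x by
              field_simp [hπ.ne', hsX.ne']
              ring,
          Real.div_sqrt]
      rw [hT1, hT2, hT3]; ring
    calc (∫ y in upperHalf, halfPlaneGreen x y * ω x * ω y)
        ≤ c₁ * S + c₂ * (∫ y in upperHalf, (kap ρ x.1 y.1)^2 * (kap ρ x.2 y.2)^2) + c₃ * X :=
          hstep.trans_eq hval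
      _ ≤ c₁ * S + c₂ * (16*ρ) + c₃ * X := by
          have := mul_le_mul_of_nonneg_left hKx hc2nn
          linarith
      _ = _ := final_eq
  -- outer bound
  have houter : (∫ x in upperHalf, ∫ y in upperHalf, halfPlaneGreen x y * ω x * ω y)
      ≤ S/(π*ρ) * S + (4/π*(ρ*Real.sqrt X)) * M := by
    have hgint : Integrable
        (fun x : ℝ × ℝ => S/(π*ρ) * (Real.sqrt x.2 * ω x) + (4/π*(ρ*Real.sqrt X)) * ω x)
        (volume.restrict upperHalf) :=
      (hsqint.const_mul (S/(π*ρ))).add (hInt.const_mul (4/π*(ρ*Real.sqrt X)))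
    have hnn : 0 ≤ᵐ[volume.restrict upperHalf]
        (fun x : ℝ × ℝ => ∫ y in upperHalf, halfPlaneGreen x y * ω x * ω y) := by
      filter_upwards [haeU] with x hx
      have hx2 : (0:ℝ) < x.2 := hx
      apply integral_nonneg_of_ae
      filter_upwards [haeU] with y hy
      have hy2 : (0:ℝ) < y.2 := hy
      have hG : 0 ≤ halfPlaneGreen x y := by
        unfold halfPlaneGreen
        have hfrac : (0:ℝ) ≤ 4*x.2*y.2/sqdist x y := by
          apply div_nonneg
          · nlinarith
          · unfold sqdist; positivity
        exact mul_nonneg (by positivity) (Real.log_nonneg (by linarith))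
      exact mul_nonneg (mul_nonneg hG (hpos x)) (hpos y)
    have hle : (fun x : ℝ × ℝ => ∫ y in upperHalf, halfPlaneGreen x y * ω x * ω y)
        ≤ᵐ[volume.restrict upperHalf]
        (fun x : ℝ × ℝ => S/(π*ρ) * (Real.sqrt x.2 * ω x) + (4/π*(ρ*Real.sqrt X)) * ω x) := by
      filter_upwards [haeU] with x hx
      exact inner_bd x hx
    have hmono := integral_mono_of_nonneg hnn hgint hle
    have hgval : (∫ x in upperHalf,
        (S/(π*ρ) * (Real.sqrt x.2 * ω x) + (4/π*(ρ*Real.sqrt X)) * ω x))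
        = S/(π*ρ) * S + (4/π*(ρ*Real.sqrt X)) * M := by
      rw [integral_add (hsqint.const_mul (S/(π*ρ))) (hInt.const_mul (4/π*(ρ*Real.sqrt X))),
        integral_const_mul _ _, integral_const_mul _ _, ← hSdef, ← hMdef]
    exact hmono.trans_eq hgval
  have hkin : kineticEnergy ω ≤ (1/2) * (S/(π*ρ) * S + (4/π*(ρ*Real.sqrt X)) * M) := by
    unfold kineticEnergy
    apply mul_le_mul_of_nonneg_left houter (by norm_num)
  -- numeric endgame
  have hAMρ : A*M/(π*ρ) = Real.sqrt A * M * Y / π := by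
    rw [hρdef]
    field_simp
    linear_combination (-1) * Real.mul_self_sqrt hA.le
  have hρX : ρ * Real.sqrt X = Real.sqrt A * Y := by
    rw [hρdef, ← hY2]
    field_simp
  have hkin2 : kineticEnergy ω ≤ (5/(2*π)) * (Real.sqrt A * M * Y) := by
    have h1 : S/(π*ρ) * S ≤ A*M/(π*ρ) := by
      rw [show S/(π*ρ)*S = S*S/(π*ρ) by ring]
      have hπρ : 0 < π*ρ := by positivity
      rw [div_le_div_iff₀ hπρ hπρ]
      nlinarith [hS2, hπρ]
    have h2 : (4/π*(ρ*Real.sqrt X)) * M = 4/π*(Real.sqrt A * Y)*M := by rw [hρX]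
    calc kineticEnergy ω ≤ (1/2) * (S/(π*ρ) * S + (4/π*(ρ*Real.sqrt X)) * M) := hkin
      _ ≤ (1/2) * (A*M/(π*ρ) + 4/π*(Real.sqrt A * Y)*M) := by
          rw [← h2]; linarith
      _ = (1/2) * (Real.sqrt A * M * Y/π + 4/π*(Real.sqrt A * Y)*M) := by rw [hAMρ]
      _ = (5/(2*π)) * (Real.sqrt A * M * Y) := by ring
  have hprod_nn : 0 ≤ Real.sqrt A * M * Y := by positivity
  have hcoef : (5/(2*π)) * (Real.sqrt A * M * Y) ≤ 5/6 * (Real.sqrt A * M * Y) := by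
    apply mul_le_mul_of_nonneg_right ?_ hprod_nn
    rw [div_le_div_iff₀ (by linarith) (by norm_num)]
    linarith
  have hyoung : Real.sqrt A * M * Y ≤
      3/4 * (A^((2:ℝ)/3) * M^((4:ℝ)/3)) + 1/4 * X := by
    have hconj : Real.HolderConjugate (4/3) 4 := Real.holderConjugate_iff.mpr ⟨by norm_num, by norm_num⟩
    have h := Real.young_inequality_of_nonneg (a := Real.sqrt A * M) (b := Y)
      (by positivity) hY.le hconj
    have e1 : (Real.sqrt A * M) ^ ((4:ℝ)/3) = A^((2:ℝ)/3) * M^((4:ℝ)/3) := by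
      rw [Real.mul_rpow (Real.sqrt_nonneg _) hMnn, Real.sqrt_eq_rpow,
        ← Real.rpow_mul hA.le]
      norm_num
    have e2 : Y ^ (4:ℝ) = X := by
      rw [hYdef, ← Real.rpow_mul hXnn]
      norm_num
    rw [show (4:ℝ)/3 = ((4:ℝ)/3) by norm_num] at h
    rw [e1, e2] at h
    have : (A^((2:ℝ)/3) * M^((4:ℝ)/3))/(4/3) = 3/4 * (A^((2:ℝ)/3) * M^((4:ℝ)/3)) := by ring
    calc Real.sqrt A * M * Y = (Real.sqrt A * M) * Y := by ring
      _ ≤ (A^((2:ℝ)/3) * M^((4:ℝ)/3))/(4/3) + X/4 := h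
      _ = 3/4 * (A^((2:ℝ)/3) * M^((4:ℝ)/3)) + 1/4 * X := by ring
  have hPnn : 0 ≤ A^((2:ℝ)/3) * M^((4:ℝ)/3) :=
    mul_nonneg (Real.rpow_nonneg hA.le _) (Real.rpow_nonneg hMnn _)
  have hkin3 : kineticEnergy ω ≤ 5/8 * (A^((2:ℝ)/3) * M^((4:ℝ)/3)) + 5/24 * X := by
    calc kineticEnergy ω ≤ 5/6 * (Real.sqrt A * M * Y) := hkin2.trans hcoef
      _ ≤ 5/6 * (3/4 * (A^((2:ℝ)/3) * M^((4:ℝ)/3)) + 1/4 * X) := by linarith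
      _ = 5/8 * (A^((2:ℝ)/3) * M^((4:ℝ)/3)) + 5/24 * X := by ring
  linarith

/-- Uniform `L²` bound for elements of `K_μ` and for minimizing sequences:
`‖ω‖₂² ≤ C(‖x₂ω‖₁^{2/3}‖ω‖₁^{4/3} − E₂[ω])`, and any minimizing sequence satisfies
`limsup ‖ω_n‖₂ ≤ C μ^{1/3}`. -/
theorem minimizing_sequence_L2_bound :
    ∃ C > 0,
      (∀ μ : ℝ, 0 < μ → ∀ ω : ℝ × ℝ → ℝ, memK μ ω →
        (∫ p in upperHalf, (ω p) ^ 2) ≤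
          C * ((∫ p in upperHalf, p.2 * ω p) ^ ((2 : ℝ) / 3) *
                (∫ p in upperHalf, ω p) ^ ((4 : ℝ) / 3) - E₂ ω)) ∧
      (∀ μ : ℝ, 0 < μ → ∀ (ω : ℕ → ℝ × ℝ → ℝ) (μs : ℕ → ℝ),
        (∀ n, memK (μs n) (ω n)) →
        Filter.Tendsto μs Filter.atTop (nhds μ) →
        Filter.Tendsto (fun n => -E₂ (ω n)) Filter.atTop (nhds (sInf (negEnergyValues μ))) →
        sInf (negEnergyValues μ) < 0 →
        Filter.limsup (fun n => Real.sqrt (∫ p in upperHalf, (ω n p) ^ 2)) Filter.atTop ≤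
          C * μ ^ ((1 : ℝ) / 3)) := by
  refine ⟨4, by norm_num, ?_, ?_⟩
  · intro μ hμ ω hK
    exact part1 hμ ω hK
  · intro μ hμ ω μs hKn hμs hE hI
    have hev1 : ∀ᶠ n in Filter.atTop, 0 < μs n := hμs.eventually_const_lt hμ
    have hev2 : ∀ᶠ n in Filter.atTop, -E₂ (ω n) < 0 := hE.eventually_lt_const hI
    have hev : ∀ᶠ n in Filter.atTop,
        Real.sqrt (∫ p in upperHalf, (ω n p)^2) ≤ 2 * (μs n) ^ ((1:ℝ)/3) := by
      filter_upwards [hev1, hev2] with n h1 h2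
      obtain ⟨hpos, hInt, hL2, hMom, hAμ, hM1⟩ := hKn n
      have hMnn : 0 ≤ ∫ p in upperHalf, ω n p := integral_nonneg (fun p => hpos p)
      have hM43 : (∫ p in upperHalf, ω n p) ^ ((4:ℝ)/3) ≤ 1 :=
        Real.rpow_le_one hMnn hM1 (by norm_num)
      have hP22 : (0:ℝ) ≤ (μs n) ^ ((2:ℝ)/3) := Real.rpow_nonneg h1.le _
      have h4 := part1 h1 (ω n) (hKn n)
      rw [hAμ] at h4
      have hprod : (μs n) ^ ((2:ℝ)/3) * (∫ p in upperHalf, ω n p) ^ ((4:ℝ)/3)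
          ≤ (μs n) ^ ((2:ℝ)/3) := by
        calc (μs n) ^ ((2:ℝ)/3) * (∫ p in upperHalf, ω n p) ^ ((4:ℝ)/3)
            ≤ (μs n) ^ ((2:ℝ)/3) * 1 := mul_le_mul_of_nonneg_left hM43 hP22
          _ = (μs n) ^ ((2:ℝ)/3) := mul_one _
      have hX4 : (∫ p in upperHalf, (ω n p)^2) ≤ 4 * ((μs n) ^ ((2:ℝ)/3)) := by
        linarith
      calc Real.sqrt (∫ p in upperHalf, (ω n p)^2)
          ≤ Real.sqrt (4 * ((μs n) ^ ((2:ℝ)/3))) := Real.sqrt_le_sqrt hX4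
        _ = 2 * (μs n) ^ ((1:ℝ)/3) := by
            rw [Real.sqrt_mul (by norm_num : (0:ℝ) ≤ 4), sqrt_four]
            congr 1
            rw [Real.sqrt_eq_rpow, ← Real.rpow_mul h1.le]
            norm_num
    have htend : Filter.Tendsto (fun n => 2 * (μs n) ^ ((1:ℝ)/3)) Filter.atTop
        (nhds (2 * μ ^ ((1:ℝ)/3))) :=
      (hμs.rpow_const (Or.inr (by norm_num))).const_mul 2
    have hbdd : Filter.IsBoundedUnder (· ≤ ·) Filter.atTop
        (fun n => 2 * (μs n) ^ ((1:ℝ)/3)) := htend.isBoundedUnder_le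
    have hcob : Filter.IsCoboundedUnder (· ≤ ·) Filter.atTop
        (fun n => Real.sqrt (∫ p in upperHalf, (ω n p)^2)) := by
      apply Filter.IsBoundedUnder.isCoboundedUnder_le
      exact ⟨0, Filter.eventually_map.mpr (Filter.Eventually.of_forall
        fun n => Real.sqrt_nonneg _)⟩
    calc Filter.limsup (fun n => Real.sqrt (∫ p in upperHalf, (ω n p)^2)) Filter.atTop
        ≤ Filter.limsup (fun n => 2 * (μs n) ^ ((1:ℝ)/3)) Filter.atTop :=
          Filter.limsup_le_limsup hev hcob hbdd
      _ = 2 * μ ^ ((1:ℝ)/3) := htend.limsup_eq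
      _ ≤ 4 * μ ^ ((1:ℝ)/3) := by
          have h13 : (0:ℝ) ≤ μ ^ ((1:ℝ)/3) := Real.rpow_nonneg hμ.le _
          linarith
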